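/- arXiv:2305.17793 — 2 statements merged into one kernel-verified Lean document; each statement's English description precedes it below -/
import Mathlib

section
/- Let f, g : ℂ → ℂ be nonconstant holomorphic maps and ψ : ℂ → ℂ a homeomorphism with f = g ∘ ψ. Then ψ is holomorphic; if moreover ψ is not injective it cannot be a homeomorphism, so ψ is a biholomorphism of ℂ, hence affine: ψ(z) = az + b with a ≠ 0. -/
open Filter Topology Set Function Polynomial Asymptotics Bornology


lemma psi_diff (f g : ℂ → ℂ) (hf : Differentiable ℂ f) (hg : Differentiable ℂ g)
    (hgc : ∃ z w : ℂ, g z ≠ g w)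
    (ψ : ℂ → ℂ) (hψ : IsHomeomorph ψ) (hcomp : ∀ z : ℂ, f z = g (ψ z)) :
    Differentiable ℂ ψ := by
  have hA : AnalyticOnNhd ℂ (deriv g) univ :=
    AnalyticOnNhd.deriv (fun u _ => hg.analyticAt u)
  have hg' : ∀ w : ℂ, ∀ᶠ u in 𝓝[≠] w, deriv g u ≠ 0 := by
    intro w
    rcases (hA w (mem_univ w)).eventually_eq_zero_or_eventually_ne_zero with h | h
    · exfalso
      obtain ⟨z1, w1, hne⟩ := hgc
      have hz : ∀ u, deriv g u = 0 := by
        intro u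
        have := hA.eqOn_zero_of_preconnected_of_eventuallyEq_zero isPreconnected_univ
          (mem_univ w) h (mem_univ u)
        exact this
      exact hne (is_const_of_deriv_eq_zero hg hz z1 w1)
    · exact h
  have key : ∀ z₀ : ℂ, deriv g (ψ z₀) ≠ 0 → DifferentiableAt ℂ ψ z₀ := by
    intro z₀ h0
    have hs : HasStrictDerivAt g (deriv g (ψ z₀)) (ψ z₀) := by
      obtain ⟨p, hp⟩ := hg.analyticAt (ψ z₀)
      have h1 := hp.hasStrictDerivAt
      have h2 : deriv g (ψ z₀) = (p 1) fun _ => 1 := h1.hasDerivAt.deriv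
      rwa [h2]
    set h := hs.localInverse g _ _ h0 with hh
    have hinv : ∀ᶠ w in 𝓝 (ψ z₀), h (g w) = w :=
      (hs.hasStrictFDerivAt_equiv h0).eventually_left_inverse
    have hev : ψ =ᶠ[𝓝 z₀] (h ∘ f) := by
      have H := (hψ.continuous.continuousAt (x := z₀)).eventually hinv
      filter_upwards [H] with z hz
      simp only [comp_apply, hcomp z]
      exact hz.symm
    have hd : DifferentiableAt ℂ (h ∘ f) z₀ := by
      have hdh : DifferentiableAt ℂ h (f z₀) := by
        rw [hcomp z₀]; exact (HasStrictDerivAt.hasDerivAt (hs.to_localInverse h0)).differentiableAt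
      exact hdh.comp z₀ (hf.differentiableAt)
    exact hd.congr_of_eventuallyEq hev
  intro z₀
  rcases eq_or_ne (deriv g (ψ z₀)) 0 with h0 | h0
  · have hmap : Tendsto ψ (𝓝[≠] z₀) (𝓝[≠] (ψ z₀)) := by
      apply tendsto_nhdsWithin_of_tendsto_nhds_of_eventually_within
      · exact (hψ.continuous.continuousAt).tendsto.mono_left nhdsWithin_le_nhds
      · filter_upwards [self_mem_nhdsWithin] with z hz
        exact fun hc => hz (hψ.bijective.injective hc)
    have hev : ∀ᶠ z in 𝓝[≠] z₀, DifferentiableAt ℂ ψ z :=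
      (hmap.eventually (hg' (ψ z₀))).mono fun z hz => key z hz
    exact (Complex.analyticAt_of_differentiable_on_punctured_nhds_of_continuousAt hev
      (hψ.continuous.continuousAt)).differentiableAt
  · exact key z₀ h0


lemma psi_growth (ψ : ℂ → ℂ) (hψ : IsHomeomorph ψ) (hd : Differentiable ℂ ψ) :
    ∃ (n : ℕ) (C R : ℝ), 0 < R ∧ ∀ z : ℂ, R ≤ ‖z‖ → ‖ψ z‖ ≤ C * ‖z‖ ^ n := by
  have htend : Tendsto ψ (cobounded ℂ) (cobounded ℂ) := by
    rw [Metric.cobounded_eq_cocompact]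
    exact le_of_eq ((hψ.homeomorph ψ).map_cocompact)
  have key : ∀ M : ℝ, ∃ δ : ℝ, 0 < δ ∧ ∀ z : ℂ, z ≠ 0 → ‖z‖ < δ → M ≤ ‖ψ z⁻¹‖ := by
    intro M
    have h : ∀ᶠ w in cobounded ℂ, M ≤ ‖ψ w‖ :=
      htend.eventually (eventually_cobounded_le_norm M)
    rw [← comap_norm_atTop, eventually_comap] at h
    obtain ⟨R, hR⟩ := h.exists_forall_of_atTop
    refine ⟨(max R 1)⁻¹, by positivity, fun z hz hlt => ?_⟩
    refine hR ‖z⁻¹‖ ?_ _ rfl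
    rw [norm_inv]
    calc R ≤ max R 1 := le_max_left _ _
    _ ≤ ‖z‖⁻¹ := by
        rw [le_inv_comm₀ (by positivity) (norm_pos_iff.2 hz)]
        exact hlt.le
  obtain ⟨δ₁, hδ₁pos, hδ₁⟩ := key 1
  set u : ℂ → ℂ := fun z => if z = 0 then 0 else (ψ z⁻¹)⁻¹ with hu
  have hmemd : {z : ℂ | z ≠ 0 ∧ ‖z‖ < δ₁} ∈ 𝓝[≠] (0:ℂ) := by
    have hball : Metric.ball (0:ℂ) δ₁ ∈ 𝓝 (0:ℂ) := Metric.ball_mem_nhds _ hδ₁pos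
    rw [mem_nhdsWithin_iff_exists_mem_nhds_inter]
    exact ⟨_, hball, fun z hz =>
      ⟨hz.2, by simpa [Metric.mem_ball, dist_zero_right] using hz.1⟩⟩
  have hune : ∀ z : ℂ, z ≠ 0 → ‖z‖ < δ₁ → ψ z⁻¹ ≠ 0 ∧ u z = (ψ z⁻¹)⁻¹ ∧ u z ≠ 0 := by
    intro z hz hlt
    have h1 : (1:ℝ) ≤ ‖ψ z⁻¹‖ := hδ₁ z hz hlt
    have h2 : ψ z⁻¹ ≠ 0 := by
      intro h; rw [h] at h1; simp at h1; linarith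
    exact ⟨h2, if_neg hz, by simp [hu, if_neg hz, h2]⟩
  have hanaly : AnalyticAt ℂ u 0 := by
    apply Complex.analyticAt_of_differentiable_on_punctured_nhds_of_continuousAt
    · filter_upwards [hmemd] with z hz
      have hzne := hz.1
      have hF : DifferentiableAt ℂ (fun w : ℂ => (ψ w⁻¹)⁻¹) z := by
        have h1 : DifferentiableAt ℂ (fun w : ℂ => ψ w⁻¹) z :=
          (hd.differentiableAt).comp z (differentiableAt_inv hzne)
        exact h1.inv (hune z hzne hz.2).1
      refine hF.congr_of_eventuallyEq ?_
      filter_upwards [isOpen_ne.mem_nhds hzne] with w hw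
      exact if_neg hw
    · have h0 : u 0 = 0 := if_pos rfl
      rw [ContinuousAt, h0, NormedAddCommGroup.tendsto_nhds_zero]
      intro ε hε
      obtain ⟨δ, hδpos, hδ⟩ := key (2 / ε)
      filter_upwards [Metric.ball_mem_nhds (0:ℂ) (lt_min hδpos hδ₁pos)] with z hz
      rcases eq_or_ne z 0 with rfl | hzne
      · simpa [h0] using hε
      · have hlt : ‖z‖ < min δ δ₁ := by
          simpa [Metric.mem_ball, dist_zero_right] using hz
        have h1 : 2 / ε ≤ ‖ψ z⁻¹‖ := hδ z hzne (hlt.trans_le (min_le_left _ _))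
        have h2 := (hune z hzne (hlt.trans_le (min_le_right _ _))).2.1
        rw [h2, norm_inv]
        have h3 : 0 < ‖ψ z⁻¹‖ := lt_of_lt_of_le (by positivity) h1
        have h4 : 0 < 2 / ε := by positivity
        rw [inv_lt_comm₀ h3 hε]
        calc ε⁻¹ < 2 / ε := by
              rw [div_eq_mul_inv]
              nlinarith [inv_pos.2 hε]
        _ ≤ ‖ψ z⁻¹‖ := h1
  have hnotzero : ¬ ∀ᶠ z in 𝓝 (0:ℂ), u z = 0 := by
    intro h
    obtain ⟨z, hz1, hz2, hz3⟩ :=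
      ((h.filter_mono nhdsWithin_le_nhds).and (eventually_of_mem hmemd fun z hz => hz)).exists
    exact (hune z hz2 hz3).2.2 hz1
  obtain ⟨n, v, hv, hv0, heq⟩ := hanaly.exists_eventuallyEq_pow_smul_nonzero_iff.mpr hnotzero
  have hv0n : 0 < ‖v 0‖ := norm_pos_iff.2 hv0
  have hvbound : ∀ᶠ z in 𝓝 (0:ℂ), ‖v 0‖ / 2 ≤ ‖v z‖ :=
    (hv.continuousAt.norm).eventually (eventually_ge_nhds (by linarith))
  have hcomb : ∀ᶠ z in 𝓝 (0:ℂ), u z = z ^ n * v z ∧ ‖v 0‖ / 2 ≤ ‖v z‖ := by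
    filter_upwards [heq, hvbound] with z h1 h2
    refine ⟨?_, h2⟩
    simpa [smul_eq_mul] using h1
  obtain ⟨δ₂, hδ₂pos, hδ₂⟩ := Metric.eventually_nhds_iff.mp hcomb
  set δ₃ := min δ₂ δ₁ with hδ₃
  have hδ₃pos : 0 < δ₃ := lt_min hδ₂pos hδ₁pos
  refine ⟨n, 2 / ‖v 0‖, δ₃⁻¹ + 1, by positivity, fun w hw => ?_⟩
  have hwpos : 0 < ‖w‖ := lt_of_lt_of_le (by positivity) hw
  have hw0 : w ≠ 0 := norm_pos_iff.1 hwpos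
  set z := w⁻¹ with hz
  have hzne : z ≠ 0 := inv_ne_zero hw0
  have hznorm : ‖z‖ < δ₃ := by
    rw [hz, norm_inv, inv_lt_comm₀ hwpos hδ₃pos]
    calc δ₃⁻¹ < δ₃⁻¹ + 1 := by linarith
    _ ≤ ‖w‖ := hw
  have h1 := hδ₂ (y := z) (by simpa [dist_zero_right] using hznorm.trans_le (min_le_left _ _))
  have h2 := hune z hzne (hznorm.trans_le (min_le_right _ _))
  have hzinv : z⁻¹ = w := inv_inv w
  have hψw : ψ w = (u z)⁻¹ := by rw [← hzinv, h2.2.1]; exact (inv_inv _).symm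
  have hvzpos : 0 < ‖v z‖ := lt_of_lt_of_le (by positivity) h1.2
  have hnorm : ‖ψ w‖ = ‖w‖ ^ n * ‖v z‖⁻¹ := by
    rw [hψw, h1.1, norm_inv, norm_mul, norm_pow, hz, norm_inv, mul_inv, inv_pow, inv_inv]
  rw [hnorm, mul_comm ((2:ℝ) / ‖v 0‖) _]
  have hvle : ‖v z‖⁻¹ ≤ 2 / ‖v 0‖ := by
    rw [← inv_div]
    exact inv_anti₀ (by positivity) h1.2
  exact mul_le_mul_of_nonneg_left hvle (by positivity)


lemma growth_poly : ∀ (n : ℕ) (F : ℂ → ℂ), Differentiable ℂ F →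
    ∀ C R : ℝ, 0 < R → (∀ z : ℂ, R ≤ ‖z‖ → ‖F z‖ ≤ C * ‖z‖ ^ n) →
    ∃ p : Polynomial ℂ, ∀ z, F z = p.eval z := by
  intro n
  induction n with
  | zero =>
    intro F hF C R hR hbd
    obtain ⟨M, hM⟩ := (isCompact_closedBall (0:ℂ) R).exists_bound_of_continuousOn
      (hF.continuous.continuousOn)
    have hbdd : IsBounded (range F) := by
      rw [isBounded_iff_forall_norm_le]
      refine ⟨max M C, ?_⟩
      rintro x ⟨z, rfl⟩
      rcases le_or_gt ‖z‖ R with h | h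
      · exact (hM z (by simpa [Metric.mem_closedBall, dist_zero_right] using h)).trans
          (le_max_left _ _)
      · have := hbd z h.le
        simp only [pow_zero, mul_one] at this
        exact this.trans (le_max_right _ _)
    obtain ⟨c, hc⟩ := hF.exists_const_forall_eq_of_bounded hbdd
    exact ⟨Polynomial.C c, fun z => by simp [hc z]⟩
  | succ n ih =>
    intro F hF C R hR hbd
    set h := dslope F 0 with hh
    have hhd : Differentiable ℂ h := by
      rw [← differentiableOn_univ]
      exact (Complex.differentiableOn_dslope (s := univ) (c := 0) univ_mem).mpr
        hF.differentiableOn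
    have heval : ∀ z : ℂ, z * h z = F z - F 0 := by
      intro z
      have := sub_smul_dslope F 0 z
      simpa [smul_eq_mul] using this
    have hbd' : ∀ z : ℂ, max R 1 ≤ ‖z‖ → ‖h z‖ ≤ (C + ‖F 0‖) * ‖z‖ ^ n := by
      intro z hz
      have hz1 : (1:ℝ) ≤ ‖z‖ := le_trans (le_max_right _ _) hz
      have hzR : R ≤ ‖z‖ := le_trans (le_max_left _ _) hz
      have hzpos : (0:ℝ) < ‖z‖ := by linarith
      have h2 : ‖z‖ * ‖h z‖ ≤ C * ‖z‖ ^ (n + 1) + ‖F 0‖ := by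
        rw [← norm_mul, heval z]
        calc ‖F z - F 0‖ ≤ ‖F z‖ + ‖F 0‖ := norm_sub_le _ _
        _ ≤ C * ‖z‖ ^ (n + 1) + ‖F 0‖ := by linarith [hbd z hzR]
      have e1 : (1:ℝ) ≤ ‖z‖ ^ n := one_le_pow₀ hz1
      have e2 : ‖z‖ ^ (n + 1) = ‖z‖ ^ n * ‖z‖ := pow_succ _ _
      have e3 : (0:ℝ) ≤ ‖F 0‖ := norm_nonneg _
      have e4 : (0:ℝ) ≤ ‖h z‖ := norm_nonneg _
      have e5 : (1:ℝ) ≤ ‖z‖ ^ n * ‖z‖ := by nlinarith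
      rw [e2] at h2
      have e6 : ‖z‖ * ‖h z‖ ≤ ‖z‖ * ((C + ‖F 0‖) * ‖z‖ ^ n) := by
        nlinarith [mul_le_mul_of_nonneg_left e5 e3]
      exact (mul_le_mul_iff_right₀ hzpos).mp e6
    obtain ⟨q, hq⟩ := ih h hhd (C + ‖F 0‖) (max R 1) (by positivity) hbd'
    refine ⟨Polynomial.C (F 0) + Polynomial.X * q, fun z => ?_⟩
    have := heval z
    rw [hq z] at this
    simp only [eval_add, eval_C, eval_mul, eval_X]
    linear_combination -this


lemma poly_inj_affine (ψ : ℂ → ℂ) (hinj : Function.Injective ψ) (p : Polynomial ℂ)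
    (hp : ∀ z, ψ z = p.eval z) :
    ∃ a b : ℂ, a ≠ 0 ∧ ∀ z : ℂ, ψ z = a * z + b := by
  have hdeg : p.natDegree ≤ 1 := by
    by_contra hdeg
    push_neg at hdeg
    have hd2 : 2 ≤ p.natDegree := hdeg
    have hp'ne : derivative p ≠ 0 := by
      intro h
      have := natDegree_eq_zero_of_derivative_eq_zero h
      omega
    have hfin2 : ((fun x => p.eval x) '' {x : ℂ | (derivative p).IsRoot x}).Finite :=
      (finite_setOf_isRoot hp'ne).image _
    obtain ⟨c, hc⟩ := hfin2.infinite_compl.nonempty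
    set q := p - Polynomial.C c with hqdef
    have hqdeg : q.natDegree = p.natDegree := natDegree_sub_C
    have hqne : q ≠ 0 := by
      intro h
      rw [h] at hqdeg
      simp at hqdeg
      omega
    have hcard : q.natDegree = Multiset.card q.roots := by
      have h1 := (IsAlgClosed.splits q).natDegree_eq_card_roots
      exact h1
    have hroot : ∀ x ∈ q.roots, p.eval x = c := by
      intro x hx
      have := isRoot_of_mem_roots hx
      have h2 : p.eval x - c = 0 := by simpa [hqdef] using this
      linear_combination h2
    by_cases hex : ∃ x ∈ q.roots, ∃ y ∈ q.roots, x ≠ y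
    · obtain ⟨x, hx, y, hy, hxy⟩ := hex
      refine hxy (hinj ?_)
      rw [hp x, hp y, hroot x hx, hroot y hy]
    · push_neg at hex
      have hpos : 0 < Multiset.card q.roots := by omega
      obtain ⟨x₀, hx₀⟩ := Multiset.card_pos_iff_exists_mem.mp hpos
      have hcount : Multiset.count x₀ q.roots = Multiset.card q.roots :=
        Multiset.count_eq_card.mpr (fun y hy => (hex x₀ hx₀ y hy))
      have hmult : 2 ≤ rootMultiplicity x₀ q := by
        rw [← Polynomial.count_roots]
        omega
      have hdvd : (X - Polynomial.C x₀) ^ 2 ∣ q :=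
        dvd_trans (pow_dvd_pow _ hmult) (pow_rootMultiplicity_dvd q x₀)
      obtain ⟨r, hr⟩ := hdvd
      have hrootp' : (derivative p).IsRoot x₀ := by
        have hdq : derivative q = derivative p := by
          rw [hqdef]
          simp
        rw [← hdq, hr]
        simp [derivative_mul, derivative_pow, IsRoot]
      exact hc ⟨x₀, hrootp', hroot x₀ hx₀⟩
  have hform := Polynomial.eq_X_add_C_of_natDegree_le_one hdeg
  have heval : ∀ z : ℂ, ψ z = p.coeff 1 * z + p.coeff 0 := by
    intro z
    rw [hp z]
    conv_lhs => rw [hform]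
    simp only [eval_add, eval_mul, eval_C, eval_X]
  refine ⟨p.coeff 1, p.coeff 0, ?_, heval⟩
  intro ha
  have h0 : ψ 0 = ψ 1 := by rw [heval 0, heval 1, ha]; ring_nf
  exact one_ne_zero (hinj h0).symm


/-- If `f` and `g` are nonconstant entire functions and `ψ` is a homeomorphism of `ℂ` with
`f = g ∘ ψ`, then `ψ` is affine: `ψ z = a z + b` with `a ≠ 0` (in particular holomorphic). -/
theorem conjugacy_is_affine (f g : ℂ → ℂ) (hf : Differentiable ℂ f) (hg : Differentiable ℂ g)
    (hfc : ∃ z w : ℂ, f z ≠ f w) (hgc : ∃ z w : ℂ, g z ≠ g w)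
    (ψ : ℂ → ℂ) (hψ : IsHomeomorph ψ) (hcomp : ∀ z : ℂ, f z = g (ψ z)) :
    ∃ a b : ℂ, a ≠ 0 ∧ ∀ z : ℂ, ψ z = a * z + b := by
  have hdψ : Differentiable ℂ ψ := psi_diff f g hf hg hgc ψ hψ hcomp
  obtain ⟨n, C, R, hRpos, hbd⟩ := psi_growth ψ hψ hdψ
  obtain ⟨p, hp⟩ := growth_poly n ψ hdψ C R hRpos hbd
  exact poly_inj_affine ψ hψ.bijective.injective p hp
end

section
/- Let A ⊂ ℝ² be a finite set and let φ : ℝ² → ℝ² be a homeomorphism such that there exists a path p in ℝ² \ A from a point b to φ(b) with the property: for every loop γ in ℝ² \ A based at b, γ is path-homotopic in ℝ² \ A to the concatenation p · (φ ∘ γ) · p̄. Then φ(a) = a for every a ∈ A. -/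
open Set

/-- A continuous real function on `[0,1]` taking integer values takes equal values at `0, 1`. -/
lemma intval_aux (m : ℝ → ℝ) (hm : Continuous m)
    (hint : ∀ t ∈ Icc (0:ℝ) 1, ∃ k : ℤ, m t = k) : m 1 = m 0 := by
  obtain ⟨k0, hk0⟩ := hint 0 (by norm_num)
  obtain ⟨k1, hk1⟩ := hint 1 (by norm_num)
  by_contra hne
  rcases lt_or_gt_of_ne hne with h | h
  · -- m 1 < m 0
    have hk : (k1:ℝ) < k0 := by rw [← hk0, ← hk1]; exact h
    have hk' : k1 + 1 ≤ k0 := Int.add_one_le_iff.mpr (by exact_mod_cast hk)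
    have hk'' : (k1:ℝ) + 1 ≤ k0 := by exact_mod_cast hk'
    have hmem : (k1:ℝ) + 1/2 ∈ Icc (m 1) (m 0) := by
      constructor
      · rw [hk1]; linarith
      · rw [hk0]; linarith
    obtain ⟨t, ht, hmt⟩ := intermediate_value_Icc' (by norm_num : (0:ℝ) ≤ 1)
      hm.continuousOn hmem
    obtain ⟨k, hk2⟩ := hint t ht
    rw [hk2] at hmt
    have : (2*(k:ℝ)) = 2*k1+1 := by linarith
    have : (2*k : ℤ) = 2*k1 + 1 := by exact_mod_cast this
    omega
  · have hk : (k0:ℝ) < k1 := by rw [← hk0, ← hk1]; exact h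
    have hk' : k0 + 1 ≤ k1 := Int.add_one_le_iff.mpr (by exact_mod_cast hk)
    have hk'' : (k0:ℝ) + 1 ≤ k1 := by exact_mod_cast hk'
    have hmem : (k0:ℝ) + 1/2 ∈ Icc (m 0) (m 1) := by
      constructor
      · rw [hk0]; linarith
      · rw [hk1]; linarith
    obtain ⟨t, ht, hmt⟩ := intermediate_value_Icc (by norm_num : (0:ℝ) ≤ 1)
      hm.continuousOn hmem
    obtain ⟨k, hk2⟩ := hint t ht
    rw [hk2] at hmt
    have : (2*(k:ℝ)) = 2*k0+1 := by linarith
    have : (2*k : ℤ) = 2*k0 + 1 := by exact_mod_cast this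
    omega

/-- A continuous `ℂ`-valued function on `[0,1]` whose `exp` is constantly 1 takes equal
values at the endpoints. -/
lemma exp_eq_one_endpoints (d : ℝ → ℂ) (hd : Continuous d)
    (h1 : ∀ t ∈ Icc (0:ℝ) 1, Complex.exp (d t) = 1) : d 1 = d 0 := by
  have key : ∀ t ∈ Icc (0:ℝ) 1, (d t).re = 0 ∧ ∃ k : ℤ, (d t).im / (2 * Real.pi) = k := by
    intro t ht
    obtain ⟨n, hn⟩ := Complex.exp_eq_one_iff.mp (h1 t ht)
    constructor
    · rw [hn]; simp
    · refine ⟨n, ?_⟩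
      rw [hn]
      have him : ((n:ℂ) * (2 * Real.pi * Complex.I)).im = n * (2 * Real.pi) := by simp
      rw [him]
      field_simp
  have him : (d 1).im = (d 0).im := by
    have h2π : (2 * Real.pi) ≠ 0 := by positivity
    have := intval_aux (fun t => (d t).im / (2 * Real.pi))
      ((Complex.continuous_im.comp hd).div_const _)
      (fun t ht => (key t ht).2)
    rw [div_eq_div_iff h2π h2π] at this
    exact mul_right_cancel₀ h2π this
  have hre1 := (key 1 (by norm_num)).1
  have hre0 := (key 0 (by norm_num)).1
  exact Complex.ext (by rw [hre1, hre0]) him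

/-- Core lifting lemma: a nonvanishing continuous family which admits a continuous logarithm
at time `0` admits one on all of `[0,1]`, provided the modulus of continuity is controlled. -/
lemma lift_core {X : Type*} [TopologicalSpace X] (f : X × ℝ → ℂ) (hf : Continuous f)
    (hne : ∀ q, f q ≠ 0) (h : X → ℂ) (hh : Continuous h)
    (hh0 : ∀ x, Complex.exp (h x) = f (x, 0)) (n : ℕ) (hn : 0 < n)
    (hsmall : ∀ (x : X), ∀ u ∈ Icc (0:ℝ) 1, ∀ v ∈ Icc (0:ℝ) 1, |u - v| ≤ 1/n →
      ‖f (x, u) - f (x, v)‖ < ‖f (x, v)‖) :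
    ∃ g : X × ℝ → ℂ, Continuous g ∧ ∀ x, ∀ t ∈ Icc (0:ℝ) 1,
      Complex.exp (g (x, t)) = f (x, t) := by
  have hnR : (0:ℝ) < n := by exact_mod_cast hn
  set r : ℕ → X × ℝ → ℂ :=
    fun j q => f (q.1, min q.2 ((j+1)/n)) / f (q.1, min q.2 (j/n)) with hr
  have hrc : ∀ j, Continuous (r j) := by
    intro j
    exact Continuous.div
      (hf.comp (continuous_fst.prodMk (continuous_snd.min continuous_const)))
      (hf.comp (continuous_fst.prodMk (continuous_snd.min continuous_const)))
      (fun q => hne _)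
  have hrne : ∀ j q, r j q ≠ 0 := fun j q => div_ne_zero (hne _) (hne _)
  have hrmem : ∀ j, j < n → ∀ q, r j q ∈ Metric.ball (1:ℂ) 1 := by
    intro j hj q
    obtain ⟨x, t⟩ := q
    have hj0 : (0:ℝ) ≤ (j:ℝ)/n := by positivity
    have hj1 : (j:ℝ)/n ≤ ((j:ℝ)+1)/n := by
      gcongr
      linarith
    have hjn : ((j:ℝ)+1)/n ≤ 1 := by
      rw [div_le_one hnR]
      have : (j:ℝ)+1 ≤ n := by exact_mod_cast hj
      linarith
    rcases le_or_gt t ((j:ℝ)/n) with h1 | h1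
    · have e1 : min t (((j:ℝ)+1)/n) = t := min_eq_left (h1.trans hj1)
      have e2 : min t ((j:ℝ)/n) = t := min_eq_left h1
      simp only [hr, e1, e2]
      rw [div_self (hne _)]
      simpa using Metric.mem_ball_self one_pos
    · set u := min t (((j:ℝ)+1)/n) with hu
      have e2 : min t ((j:ℝ)/n) = (j:ℝ)/n := min_eq_right h1.le
      have huIcc : u ∈ Icc (0:ℝ) 1 := by
        constructor
        · exact le_min (by linarith) (by positivity)
        · exact (min_le_right _ _).trans hjn
      have hvIcc : (j:ℝ)/n ∈ Icc (0:ℝ) 1 := ⟨hj0, hj1.trans hjn⟩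
      have huv : |u - (j:ℝ)/n| ≤ 1/n := by
        have h1' : (j:ℝ)/n ≤ u := le_min h1.le hj1
        have h2' : u ≤ ((j:ℝ)+1)/n := min_le_right _ _
        rw [abs_le]
        constructor
        · have : (0:ℝ) < 1/n := by positivity
          linarith
        · have : ((j:ℝ)+1)/n - (j:ℝ)/n = 1/n := by field_simp; ring
          linarith
      have hlt := hsmall x u huIcc ((j:ℝ)/n) hvIcc huv
      have hvne := hne (x, (j:ℝ)/n)
      simp only [hr, e2, Metric.mem_ball, dist_eq_norm]
      rw [div_sub_one hvne, norm_div, div_lt_one (norm_pos_iff.mpr hvne)]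
      · exact hlt
  refine ⟨fun q => h q.1 + ∑ j ∈ Finset.range n, Complex.log (r j q), ?_, ?_⟩
  · apply (hh.comp continuous_fst).add
    apply continuous_finset_sum
    intro j hj
    rw [continuous_iff_continuousAt]
    intro q
    exact (continuousAt_clog
      (Complex.ball_one_subset_slitPlane (hrmem j (Finset.mem_range.mp hj) q))).comp
      (hrc j).continuousAt
  · intro x t ht
    rw [Complex.exp_add, Complex.exp_sum]
    have hexplog : ∀ j ∈ Finset.range n, Complex.exp (Complex.log (r j (x, t))) = r j (x, t) :=
      fun j _ => Complex.exp_log (hrne j _)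
    rw [Finset.prod_congr rfl hexplog, hh0]
    set a : ℕ → ℂ := fun j => f (x, min t ((j:ℝ)/n)) with ha
    have hane : ∀ j, a j ≠ 0 := fun j => hne _
    have hrj : ∀ j, r j (x, t) = a (j+1) / a j := by
      intro j
      simp only [hr, ha]
      norm_num
    have tel : ∀ m, ∏ j ∈ Finset.range m, (a (j+1) / a j) = a m / a 0 := by
      intro m
      induction m with
      | zero => simp [div_self (hane 0)]
      | succ m ih =>
        rw [Finset.prod_range_succ, ih, div_mul_div_comm, mul_comm (a 0) (a m), mul_div_mul_left _ _ (hane m)]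
    have ha0 : a 0 = f (x, 0) := by
      simp only [ha]
      norm_num
      rw [min_eq_right ht.1]
    have han : a n = f (x, t) := by
      simp only [ha]
      rw [div_self (ne_of_gt hnR), min_eq_left ht.2]
    calc f (x, 0) * ∏ j ∈ Finset.range n, r j (x, t)
        = f (x, 0) * ∏ j ∈ Finset.range n, (a (j+1) / a j) := by
          rw [Finset.prod_congr rfl (fun j _ => hrj j)]
      _ = f (x, 0) * (a n / a 0) := by rw [tel]
      _ = f (x, t) := by rw [ha0, han, mul_comm, div_mul_cancel₀ _ (hne _)]

/-- A uniform modulus of continuity for a nonvanishing map on the compact square. -/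
lemma exists_n (F : unitInterval × unitInterval → ℂ) (hF : Continuous F)
    (h0 : ∀ q, F q ≠ 0) :
    ∃ n : ℕ, 0 < n ∧ ∀ (s u v : unitInterval), dist (u:ℝ) (v:ℝ) ≤ 1/n →
      ‖F (s, u) - F (s, v)‖ < ‖F (s, v)‖ := by
  obtain ⟨q₀, -, hq₀⟩ := isCompact_univ.exists_isMinOn (Set.univ_nonempty)
    ((continuous_norm.comp hF).continuousOn)
  have hε : 0 < ‖F q₀‖ := norm_pos_iff.mpr (h0 q₀)
  have huc := CompactSpace.uniformContinuous_of_continuous hF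
  rw [Metric.uniformContinuous_iff] at huc
  obtain ⟨δ, hδ, hd⟩ := huc _ hε
  obtain ⟨n, hn⟩ := exists_nat_one_div_lt hδ
  refine ⟨n + 1, Nat.succ_pos n, fun s u v huv => ?_⟩
  have hdist : dist ((s, u) : unitInterval × unitInterval) (s, v) < δ := by
    rw [Prod.dist_eq]
    have h2 : dist u v < δ := by
      rw [Subtype.dist_eq]
      calc dist (u:ℝ) (v:ℝ) ≤ 1/(n+1) := by exact_mod_cast huv
        _ < δ := by exact_mod_cast hn
    simp only [dist_self]
    exact max_lt hδ h2
  calc ‖F (s, u) - F (s, v)‖ = dist (F (s, u)) (F (s, v)) := (dist_eq_norm _ _).symm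
    _ < ‖F q₀‖ := hd hdist
    _ ≤ ‖F (s, v)‖ := hq₀ (mem_univ _)

/-- Existence of a continuous logarithm of `η - a` along a path missing `a`. -/
lemma exists_log (a : ℂ) (η : ℝ → ℂ) (hη : Continuous η)
    (h0 : ∀ t ∈ Icc (0:ℝ) 1, η t ≠ a) :
    ∃ g : ℝ → ℂ, Continuous g ∧ ∀ t ∈ Icc (0:ℝ) 1, a + Complex.exp (g t) = η t := by
  set f : Unit × ℝ → ℂ := fun q => η ((projIcc (0:ℝ) 1 zero_le_one q.2 : ℝ)) - a with hf
  have hfc : Continuous f := by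
    apply Continuous.sub _ continuous_const
    exact hη.comp (continuous_subtype_val.comp (continuous_projIcc.comp continuous_snd))
  have hfne : ∀ q, f q ≠ 0 := by
    intro q
    exact sub_ne_zero.mpr (h0 _ (projIcc (0:ℝ) 1 zero_le_one q.2).2)
  set F : unitInterval × unitInterval → ℂ := fun q => η (q.2 : ℝ) - a with hF
  have hFc : Continuous F := by
    apply Continuous.sub _ continuous_const
    exact hη.comp (continuous_subtype_val.comp continuous_snd)
  have hF0 : ∀ q, F q ≠ 0 := fun q => sub_ne_zero.mpr (h0 _ q.2.2)
  obtain ⟨n, hn, hsm⟩ := exists_n F hFc hF0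
  have hfF : ∀ (x : Unit) (u : ℝ) (hu : u ∈ Icc (0:ℝ) 1), f (x, u) = F (0, ⟨u, hu⟩) := by
    intro x u hu
    show η ↑(projIcc (0:ℝ) 1 zero_le_one u) - a = η ↑(⟨u, hu⟩ : unitInterval) - a
    rw [projIcc_of_mem _ hu]
  obtain ⟨g, hgc, hge⟩ := lift_core f hfc hfne (fun _ => Complex.log (η 0 - a)) continuous_const
    (fun x => by
      rw [Complex.exp_log (sub_ne_zero.mpr (h0 0 (by norm_num)))]
      simp only [hf]
      rw [projIcc_left]) n hn
    (by
      intro x u hu v hv huv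
      rw [hfF x u hu, hfF x v hv]
      exact hsm 0 ⟨u, hu⟩ ⟨v, hv⟩ (by rwa [Real.dist_eq]))
  refine ⟨fun t => g (Unit.unit, t), hgc.comp (Continuous.prodMk continuous_const continuous_id),
    fun t ht => ?_⟩
  have hft : f (Unit.unit, t) = η t - a := by
    simp only [hf]
    rw [projIcc_of_mem _ ht]
  rw [hge Unit.unit t ht, hft]
  ring

open scoped Classical in
/-- The winding number (times `2πi`) of a function around `a`, computed on `[0,1]`. -/
noncomputable def wind (a : ℂ) (η : ℝ → ℂ) : ℂ :=
  if h : ∃ g : ℝ → ℂ, Continuous g ∧ ∀ t ∈ Icc (0:ℝ) 1, a + Complex.exp (g t) = η t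
  then h.choose 1 - h.choose 0 else 0



lemma wind_eq (a : ℂ) (η : ℝ → ℂ) (g : ℝ → ℂ) (hg : Continuous g)
    (he : ∀ t ∈ Icc (0:ℝ) 1, a + Complex.exp (g t) = η t) : wind a η = g 1 - g 0 := by
  have h : ∃ g : ℝ → ℂ, Continuous g ∧ ∀ t ∈ Icc (0:ℝ) 1, a + Complex.exp (g t) = η t :=
    ⟨g, hg, he⟩
  rw [wind, dif_pos h]
  obtain ⟨hc, he'⟩ := h.choose_spec
  have hd : ∀ t ∈ Icc (0:ℝ) 1, Complex.exp (h.choose t - g t) = 1 := by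
    intro t ht
    rw [Complex.exp_sub]
    have e1 : Complex.exp (h.choose t) = η t - a := by
      have := he' t ht; linear_combination this
    have e2 : Complex.exp (g t) = η t - a := by
      have := he t ht; linear_combination this
    rw [e1, e2, div_self]
    rw [← e2]
    exact Complex.exp_ne_zero _
  have h2 := exp_eq_one_endpoints (fun t => h.choose t - g t) (hc.sub hg) hd
  have h3 : h.choose 1 - g 1 = h.choose 0 - g 0 := h2
  linear_combination h3

/-- Values of a concatenation satisfy a predicate iff both pieces do. -/
lemma trans_forall {X : Type*} [TopologicalSpace X] {x y z : X} (P : Path x y) (Q : Path y z)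
    (C : X → Prop) (hP : ∀ t, C (P t)) (hQ : ∀ t, C (Q t)) : ∀ t, C ((P.trans Q) t) := by
  intro t
  rw [Path.trans_apply]
  split_ifs
  · exact hP _
  · exact hQ _

lemma forall_of_trans_left {X : Type*} [TopologicalSpace X] {x y z : X}
    (P : Path x y) (Q : Path y z) (C : X → Prop) (h : ∀ t, C ((P.trans Q) t)) :
    ∀ t, C (P t) := by
  intro t
  have ht2 : ((t:ℝ)/2) ∈ unitInterval := by
    constructor
    · have := t.2.1; linarith
    · have := t.2.2; linarith
  have := h ⟨(t:ℝ)/2, ht2⟩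
  rw [Path.trans_apply] at this
  have hle : ((⟨(t:ℝ)/2, ht2⟩ : unitInterval) : ℝ) ≤ 1/2 := by
    have := t.2.2
    simp only
    linarith
  rw [dif_pos hle] at this
  convert this using 2
  ext
  simp only
  ring

lemma forall_of_symm {X : Type*} [TopologicalSpace X] {x y : X}
    (P : Path x y) (C : X → Prop) (h : ∀ t, C (P.symm t)) : ∀ t, C (P t) := by
  intro t
  have := h (unitInterval.symm t)
  rw [Path.symm_apply] at this
  simpa using this

lemma forall_of_trans_right {X : Type*} [TopologicalSpace X] {x y z : X}
    (P : Path x y) (Q : Path y z) (C : X → Prop) (h : ∀ t, C ((P.trans Q) t)) :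
    ∀ t, C (Q t) := by
  have h1 : ∀ t, C ((P.trans Q).symm t) := by
    intro t
    rw [Path.symm_apply]
    exact h _
  rw [Path.trans_symm] at h1
  exact forall_of_symm Q C (forall_of_trans_left Q.symm P.symm C h1)

/-- extension of a path missing `a` misses `a` on `[0,1]`. -/
lemma path_ne_aux {x y : ℂ} (P : Path x y) (a : ℂ) (h : ∀ t : unitInterval, P t ≠ a) :
    ∀ t ∈ Icc (0:ℝ) 1, P.extend t ≠ a := fun t ht => by
  rw [Path.extend_apply P ht]; exact h _

lemma wind_trans {x y z : ℂ} (a : ℂ) (P : Path x y) (Q : Path y z)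
    (hP : ∀ t : unitInterval, P t ≠ a) (hQ : ∀ t : unitInterval, Q t ≠ a) :
    wind a (P.trans Q).extend = wind a P.extend + wind a Q.extend := by
  obtain ⟨g, hgc, hge⟩ := exists_log a P.extend P.continuous_extend (path_ne_aux P a hP)
  obtain ⟨g', hg'c, hg'e⟩ := exists_log a Q.extend Q.continuous_extend (path_ne_aux Q a hQ)
  have hyne : y - a ≠ 0 := sub_ne_zero.mpr (by simpa using hP 1)
  have e1 : Complex.exp (g 1) = y - a := by
    have := hge 1 (by norm_num)
    rw [Path.extend_one] at this
    linear_combination this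
  have e0 : Complex.exp (g' 0) = y - a := by
    have := hg'e 0 (by norm_num)
    rw [Path.extend_zero] at this
    linear_combination this
  set g'' : ℝ → ℂ := fun t => g' t + (g 1 - g' 0) with hg''
  have hg''c : Continuous g'' := hg'c.add continuous_const
  have hg''e : ∀ t ∈ Icc (0:ℝ) 1, a + Complex.exp (g'' t) = Q.extend t := by
    intro t ht
    simp only [hg'']
    rw [Complex.exp_add, Complex.exp_sub, e1, e0, div_self hyne, mul_one]
    exact hg'e t ht
  set G : ℝ → ℂ := fun t => if t ≤ 1/2 then g (2*t) else g'' (2*t - 1) with hG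
  have hGc : Continuous G := by
    apply Continuous.if_le (hgc.comp (by fun_prop)) (hg''c.comp (by fun_prop))
      continuous_id continuous_const
    intro t ht
    simp only [id_eq] at ht
    subst ht
    show g (2 * (1/2:ℝ)) = g'' (2 * (1/2:ℝ) - 1)
    norm_num
    simp only [hg'']
    ring
  have hGe : ∀ t ∈ Icc (0:ℝ) 1, a + Complex.exp (G t) = (P.trans Q).extend t := by
    intro t ht
    rw [Path.extend_apply _ ht, Path.trans_apply]
    simp only [hG]
    split_ifs with h
    · have h2 : 2*t ∈ Icc (0:ℝ) 1 := ⟨by linarith [ht.1], by linarith⟩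
      exact (hge (2*t) h2).trans (P.extend_apply h2)
    · have h2 : 2*t - 1 ∈ Icc (0:ℝ) 1 := ⟨by push_neg at h; linarith, by linarith [ht.2]⟩
      exact (hg''e (2*t-1) h2).trans (Q.extend_apply h2)
  rw [wind_eq a _ G hGc hGe, wind_eq a _ g hgc hge, wind_eq a _ g' hg'c hg'e]
  have hG1 : G 1 = g'' 1 := by rw [hG]; norm_num
  have hG0 : G 0 = g 0 := by rw [hG]; norm_num
  rw [hG1, hG0]
  simp only [hg'']
  ring

lemma wind_symm {x y : ℂ} (a : ℂ) (P : Path x y) (hP : ∀ t : unitInterval, P t ≠ a) :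
    wind a P.symm.extend = - wind a P.extend := by
  obtain ⟨g, hgc, hge⟩ := exists_log a P.extend P.continuous_extend (path_ne_aux P a hP)
  set G : ℝ → ℂ := fun t => g (1 - t) with hG
  have hGc : Continuous G := hgc.comp (by fun_prop)
  have hGe : ∀ t ∈ Icc (0:ℝ) 1, a + Complex.exp (G t) = P.symm.extend t := by
    intro t ht
    have h2 : 1 - t ∈ Icc (0:ℝ) 1 := ⟨by linarith [ht.2], by linarith [ht.1]⟩
    rw [Path.extend_apply _ ht]
    exact (hge (1-t) h2).trans (P.extend_apply h2)
  rw [wind_eq a _ G hGc hGe, wind_eq a _ g hgc hge]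
  simp only [hG]
  norm_num

/-- Homotopy invariance of the winding number for loops. -/
lemma wind_homotopy (a : ℂ) {x : ℂ} {P Q : Path x x} (H : P.Homotopy Q)
    (hH : ∀ q : unitInterval × unitInterval, H q ≠ a) :
    wind a P.extend = wind a Q.extend := by
  have hx : x - a ≠ 0 := by
    have h00 : H (0, 0) = x := by
      have := ContinuousMap.Homotopy.apply_zero H.toHomotopy 0
      simpa using this
    exact sub_ne_zero.mpr (h00 ▸ hH (0, 0))
  set pj := projIcc (0:ℝ) 1 zero_le_one with hpj
  set f : unitInterval × ℝ → ℂ := fun q => H (q.1, pj q.2) - a with hf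
  have hfc : Continuous f := by
    apply Continuous.sub _ continuous_const
    exact H.continuous.comp (continuous_fst.prodMk (continuous_projIcc.comp continuous_snd))
  have hfne : ∀ q, f q ≠ 0 := fun q => sub_ne_zero.mpr (hH _)
  set F : unitInterval × unitInterval → ℂ := fun q => H q - a with hF
  have hFc : Continuous F := H.continuous.sub continuous_const
  have hF0 : ∀ q, F q ≠ 0 := fun q => sub_ne_zero.mpr (hH q)
  obtain ⟨n, hn, hsm⟩ := exists_n F hFc hF0
  have hedge : ∀ s : unitInterval, H (s, 0) = x := by
    intro s
    have := H.prop' s  -- or eq_fst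
    have h0 : (0 : unitInterval) ∈ ({0, 1} : Set unitInterval) := by norm_num
    have := ContinuousMap.HomotopyRel.eq_fst H s h0
    simpa using this
  obtain ⟨G, hGc, hGe⟩ := lift_core f hfc hfne (fun _ => Complex.log (x - a)) continuous_const
    (fun s => by
      rw [Complex.exp_log hx]
      simp only [hf, hpj]
      rw [projIcc_left]
      have := hedge s
      rw [show ((⟨(0:ℝ), by norm_num⟩ : unitInterval)) = (0 : unitInterval) from rfl, this]) n hn
    (by
      intro s u hu v hv huv
      have h1 : f (s, u) = F (s, ⟨u, hu⟩) := by
        simp only [hf, hF, hpj]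
        rw [projIcc_of_mem _ hu]
      have h2 : f (s, v) = F (s, ⟨v, hv⟩) := by
        simp only [hf, hF, hpj]
        rw [projIcc_of_mem _ hv]
      rw [h1, h2]
      exact hsm s ⟨u, hu⟩ ⟨v, hv⟩ (by rwa [Real.dist_eq]))
  have wP : wind a P.extend = G (0, 1) - G (0, 0) := by
    apply wind_eq a _ (fun t => G (0, t)) (hGc.comp (continuous_const.prodMk continuous_id))
    intro t ht
    rw [hGe 0 t ht]
    have : f (0, t) = P.extend t - a := by
      simp only [hf, hpj]
      rw [projIcc_of_mem _ ht]
      have happ : H ((0 : unitInterval), (⟨t, ht⟩ : unitInterval)) = P ⟨t, ht⟩ :=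
        ContinuousMap.Homotopy.apply_zero H.toHomotopy ⟨t, ht⟩
      rw [happ, Path.extend_apply]
    rw [this]
    ring
  have wQ : wind a Q.extend = G (1, 1) - G (1, 0) := by
    apply wind_eq a _ (fun t => G (1, t)) (hGc.comp (continuous_const.prodMk continuous_id))
    intro t ht
    rw [hGe 1 t ht]
    have : f (1, t) = Q.extend t - a := by
      simp only [hf, hpj]
      rw [projIcc_of_mem _ ht]
      have happ : H ((1 : unitInterval), (⟨t, ht⟩ : unitInterval)) = Q ⟨t, ht⟩ :=
        ContinuousMap.Homotopy.apply_one H.toHomotopy ⟨t, ht⟩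
      rw [happ, Path.extend_apply]
    rw [this]
    ring
  have hedge1 : ∀ s : unitInterval, H (s, 1) = x := by
    intro s
    have h1 : (1 : unitInterval) ∈ ({0, 1} : Set unitInterval) := by norm_num
    have := ContinuousMap.HomotopyRel.eq_fst H s h1
    simpa using this
  set D : ℝ → ℂ := fun s => G (pj s, 1) - G (pj s, 0) with hD
  have hDc : Continuous D := by
    apply Continuous.sub
    · exact hGc.comp ((continuous_projIcc).prodMk continuous_const)
    · exact hGc.comp ((continuous_projIcc).prodMk continuous_const)
  have hD1 : ∀ s ∈ Icc (0:ℝ) 1, Complex.exp (D s) = 1 := by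
    intro s hs
    simp only [hD]
    rw [Complex.exp_sub, hGe (pj s) 1 (by norm_num), hGe (pj s) 0 (by norm_num)]
    have e1 : f (pj s, 1) = x - a := by
      simp only [hf, hpj]
      rw [projIcc_right]
      rw [show ((⟨(1:ℝ), by norm_num⟩ : unitInterval)) = (1 : unitInterval) from rfl]
      rw [hedge1]
    have e0 : f (pj s, 0) = x - a := by
      simp only [hf, hpj]
      rw [projIcc_left]
      rw [show ((⟨(0:ℝ), by norm_num⟩ : unitInterval)) = (0 : unitInterval) from rfl]
      rw [hedge]
    rw [e1, e0, div_self hx]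
  have := exp_eq_one_endpoints D hDc hD1
  simp only [hD, hpj] at this
  rw [projIcc_left, projIcc_right] at this
  rw [wP, wQ]
  rw [show ((⟨(0:ℝ), by norm_num⟩ : unitInterval)) = (0 : unitInterval) from rfl,
    show ((⟨(1:ℝ), by norm_num⟩ : unitInterval)) = (1 : unitInterval) from rfl] at this
  rw [this]

lemma abs_exp_I_mul (t : ℝ) : ‖Complex.exp (2*Real.pi*Complex.I*t)‖ = 1 := by
  rw [Complex.norm_exp]
  norm_num [Complex.mul_re]

/-- winding number of the standard circle of radius `r` around its center. -/
lemma wind_circle (a : ℂ) (r : ℝ) (hr : 0 < r) (c : Path (a+r) (a+r))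
    (hc : ∀ t : unitInterval, c t = a + r * Complex.exp (2*Real.pi*Complex.I*t)) :
    wind a c.extend = 2*Real.pi*Complex.I := by
  set g : ℝ → ℂ := fun t => Complex.log r + 2*Real.pi*Complex.I*t with hg
  have hgc : Continuous g := by fun_prop
  have hge : ∀ t ∈ Icc (0:ℝ) 1, a + Complex.exp (g t) = c.extend t := by
    intro t ht
    rw [Path.extend_apply _ ht, hc ⟨t, ht⟩]
    simp only [hg]
    rw [Complex.exp_add, Complex.exp_log (by exact_mod_cast hr.ne' : (r:ℂ) ≠ 0)]
  rw [wind_eq a _ g hgc hge]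
  simp only [hg]
  push_cast
  ring

/-- The image under `ψ` of a circle bounding a disk on which `ψ` misses `a` has zero
winding number around `a`. -/
lemma wind_circle_map_zero (a : ℂ) (r : ℝ) (hr : 0 < r) (ψ : ℂ → ℂ) (hψ : Continuous ψ)
    (hmiss : ∀ w : ℂ, dist w a ≤ r → ψ w ≠ a) (c : Path (a+r) (a+r))
    (hc : ∀ t : unitInterval, c t = a + r * Complex.exp (2*Real.pi*Complex.I*t)) :
    wind a (c.map hψ).extend = 0 := by
  set pj := projIcc (0:ℝ) 1 zero_le_one with hpj
  have hdisk : ∀ (s t : ℝ), 0 ≤ s → s ≤ 1 →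
      dist (a + s*r*Complex.exp (2*Real.pi*Complex.I*t)) a ≤ r := by
    intro s t hs hs1
    rw [dist_eq_norm, add_sub_cancel_left]
    calc ‖(s:ℂ)*r*Complex.exp (2*Real.pi*Complex.I*t)‖
        = ‖(s:ℂ)‖ * ‖(r:ℂ)‖ * ‖Complex.exp (2*Real.pi*Complex.I*t)‖ := by
          rw [norm_mul, norm_mul]
      _ = s * r := by
          rw [show ‖Complex.exp (2*Real.pi*Complex.I*t)‖ = 1 from abs_exp_I_mul t]
          simp [abs_of_nonneg hs, abs_of_nonneg hr.le]
      _ ≤ r := by nlinarith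
  set f : unitInterval × ℝ → ℂ :=
    fun q => ψ (a + (q.1:ℝ)*r*Complex.exp (2*Real.pi*Complex.I*(pj q.2 : ℝ))) - a with hf
  have hfc : Continuous f := by
    apply Continuous.sub _ continuous_const
    apply hψ.comp
    apply Continuous.add continuous_const
    apply Continuous.mul
    · fun_prop
    · apply Complex.continuous_exp.comp
      fun_prop
  have hfne : ∀ q, f q ≠ 0 := by
    intro ⟨s, t⟩
    apply sub_ne_zero.mpr
    exact hmiss _ (hdisk s (pj t) s.2.1 s.2.2)
  set F : unitInterval × unitInterval → ℂ :=
    fun q => ψ (a + (q.1:ℝ)*r*Complex.exp (2*Real.pi*Complex.I*(q.2:ℝ))) - a with hF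
  have hFc : Continuous F := by
    apply Continuous.sub _ continuous_const
    apply hψ.comp
    apply Continuous.add continuous_const
    apply Continuous.mul
    · fun_prop
    · apply Complex.continuous_exp.comp
      fun_prop
  have hF0 : ∀ q, F q ≠ 0 := by
    intro ⟨s, t⟩
    apply sub_ne_zero.mpr
    exact hmiss _ (hdisk s t s.2.1 s.2.2)
  obtain ⟨n, hn, hsm⟩ := exists_n F hFc hF0
  -- lift along the bottom edge
  obtain ⟨g₀, hg₀c, hg₀e⟩ := exists_log a (fun s => ψ (a + (pj s : ℝ)*r))
    (hψ.comp (by fun_prop))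
    (fun s hs => hmiss _ (by
      have := hdisk (pj s : ℝ) 0 (pj s).2.1 (pj s).2.2
      simpa using this))
  obtain ⟨G, hGc, hGe⟩ := lift_core f hfc hfne (fun s => g₀ (s:ℝ))
    (hg₀c.comp continuous_subtype_val)
    (fun s => by
      have h1 := hg₀e (s:ℝ) s.2
      have h2 : f (s, 0) = ψ (a + (s:ℝ)*r) - a := by
        simp only [hf, hpj]
        rw [projIcc_left]
        norm_num
      rw [h2]
      have h3 : (pj (s:ℝ) : ℝ) = (s:ℝ) := by
        rw [hpj, projIcc_of_mem _ s.2]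
      rw [h3] at h1
      linear_combination h1) n hn
    (by
      intro s u hu v hv huv
      have h1 : f (s, u) = F (s, ⟨u, hu⟩) := by
        simp only [hf, hF, hpj]
        rw [projIcc_of_mem _ hu]
      have h2 : f (s, v) = F (s, ⟨v, hv⟩) := by
        simp only [hf, hF, hpj]
        rw [projIcc_of_mem _ hv]
      rw [h1, h2]
      exact hsm s ⟨u, hu⟩ ⟨v, hv⟩ (by rwa [Real.dist_eq]))
  -- the function s ↦ G(s,1) - G(s,0) is 0 at s = 0 and constant
  have hends : ∀ s : unitInterval, f (s, 1) = f (s, 0) := by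
    intro s
    simp only [hf, hpj]
    rw [projIcc_left, projIcc_right]
    norm_num [Complex.exp_two_pi_mul_I]
  set D : ℝ → ℂ := fun s => G (pj s, 1) - G (pj s, 0) with hD
  have hDc : Continuous D :=
    (hGc.comp ((continuous_projIcc).prodMk continuous_const)).sub
      (hGc.comp ((continuous_projIcc).prodMk continuous_const))
  have hD1 : ∀ s ∈ Icc (0:ℝ) 1, Complex.exp (D s) = 1 := by
    intro s hs
    simp only [hD]
    rw [Complex.exp_sub, hGe (pj s) 1 (by norm_num), hGe (pj s) 0 (by norm_num),
      hends (pj s), div_self (hfne _)]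
  have hD10 := exp_eq_one_endpoints D hDc hD1
  -- D 0 = 0
  set E : ℝ → ℂ := fun t => G (0, t) - G (0, 0) with hE
  have hEc : Continuous E :=
    (hGc.comp (continuous_const.prodMk continuous_id)).sub continuous_const
  have hconst0 : ∀ t : ℝ, t ∈ Icc (0:ℝ) 1 → f (0, t) = ψ a - a := by
    intro t ht
    simp only [hf]
    norm_num
  have hE1 : ∀ t ∈ Icc (0:ℝ) 1, Complex.exp (E t) = 1 := by
    intro t ht
    simp only [hE]
    rw [Complex.exp_sub, hGe 0 t ht, hGe 0 0 (by norm_num),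
      hconst0 t ht, hconst0 0 (by norm_num), div_self]
    rw [← hconst0 0 (by norm_num)]
    exact hfne _
  have hE10 := exp_eq_one_endpoints E hEc hE1
  simp only [hE, sub_self] at hE10
  -- hE10 : G (0,1) - G (0,0) = 0
  have hD0 : D 0 = 0 := by
    simp only [hD, hpj]
    rw [projIcc_left]
    rw [show ((⟨(0:ℝ), by norm_num⟩ : unitInterval)) = (0 : unitInterval) from rfl]
    exact hE10
  have hD1' : D 1 = 0 := hD10.trans hD0
  -- wind = D 1
  have hwind : wind a (c.map hψ).extend = G (1, 1) - G (1, 0) := by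
    apply wind_eq a _ (fun t => G (1, t)) (hGc.comp (continuous_const.prodMk continuous_id))
    intro t ht
    rw [hGe 1 t ht]
    have h1 : f (1, t) = (c.map hψ).extend t - a := by
      simp only [hf, hpj]
      rw [projIcc_of_mem _ ht]
      rw [Path.extend_apply _ ht]
      have : (c.map hψ) (⟨t, ht⟩ : unitInterval) = ψ (c ⟨t, ht⟩) := rfl
      rw [this, hc ⟨t, ht⟩]
      norm_num
    rw [h1]
    ring
  rw [hwind]
  have : G (1, 1) - G (1, 0) = D 1 := by
    simp only [hD, hpj]
    rw [projIcc_right]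
    rw [show ((⟨(1:ℝ), by norm_num⟩ : unitInterval)) = (1 : unitInterval) from rfl]
  rw [this, hD1']

/-- Let `A ⊆ ℂ ≅ ℝ²` be finite, `φ` a homeomorphism of the plane, `b ∉ A`, and `p` a path in the
complement of `A` from `b` to `φ b` such that every loop `γ` in the complement of `A` based at
`b` is path-homotopic in the complement of `A` to the concatenation `p · (φ ∘ γ) · p̄`. Then `φ`
fixes every point of `A`. -/
theorem fixes_marked_points_of_loop_condition (A : Set ℂ) (hA : A.Finite)
    (φ : ℂ ≃ₜ ℂ) (b : ℂ) (hb : b ∉ A)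
    (p : Path b (φ b)) (hp : ∀ t, p t ∉ A)
    (hloops : ∀ γ : Path b b, (∀ t, γ t ∉ A) →
      ∃ H : γ.Homotopy ((p.trans (γ.map φ.continuous)).trans p.symm),
        ∀ x : unitInterval × unitInterval, H x ∉ A) :
    ∀ a ∈ A, φ a = a := by
  intro a haA
  by_contra hfix
  have ha'ne : φ.symm a ≠ a := by
    intro h
    apply hfix
    have := congrArg φ h
    rw [φ.apply_symm_apply] at this
    exact this.symm
  set a' := φ.symm a with ha'def
  -- a finite "bad set" avoiding a
  set S : Set ℂ := insert a' (insert b (A \ {a})) with hSdef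
  have hSfin : S.Finite := (((hA.diff (t := {a})).insert b).insert a')
  have haS : a ∉ S := by
    simp only [hSdef, mem_insert_iff, mem_diff, mem_singleton_iff]
    push_neg
    exact ⟨Ne.symm ha'ne, fun h => hb (h ▸ haA), fun _ => trivial⟩
  obtain ⟨ε, hε, hball⟩ := Metric.isOpen_iff.mp hSfin.isClosed.isOpen_compl a haS
  set r : ℝ := ε/2 with hrdef
  have hr : 0 < r := by positivity
  have hkey : ∀ w : ℂ, dist w a ≤ r → w ∉ S := by
    intro w hw
    apply hball
    rw [Metric.mem_ball]
    calc dist w a ≤ ε/2 := hw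
      _ < ε := by linarith
  -- the small circle around a
  set c : Path (a + (r:ℂ)) (a + (r:ℂ)) :=
    { toContinuousMap := ⟨fun t => a + r * Complex.exp (2*Real.pi*Complex.I*(t:ℝ)), by fun_prop⟩,
      source' := by simp
      target' := by
        show a + ↑r * Complex.exp (2*Real.pi*Complex.I*((1 : unitInterval):ℝ)) = a + ↑r
        simp [Complex.exp_two_pi_mul_I] } with hcdef
  have hc : ∀ t : unitInterval, c t = a + r * Complex.exp (2*Real.pi*Complex.I*(t:ℝ)) :=
    fun t => rfl
  have habs1 : ∀ t : ℝ, ‖Complex.exp (2*Real.pi*Complex.I*t)‖ = 1 := by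
    intro t
    rw [Complex.norm_exp]
    norm_num [Complex.mul_re]
  have hcdist : ∀ t : unitInterval, dist (c t) a = r := by
    intro t
    rw [hc, dist_eq_norm, add_sub_cancel_left, norm_mul]
    rw [show ‖Complex.exp (2*Real.pi*Complex.I*((t:ℝ):ℂ))‖ =
      ‖Complex.exp (2*Real.pi*Complex.I*((t:ℝ):ℂ))‖ from rfl]
    rw [habs1]
    simp [abs_of_nonneg hr.le]
  have hca : ∀ t : unitInterval, c t ≠ a := by
    intro t h
    have := hcdist t
    rw [h, dist_self] at this
    exact hr.ne this
  have hcA : ∀ t : unitInterval, c t ∉ A := by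
    intro t hmem
    apply hkey (c t) (le_of_eq (hcdist t))
    simp only [hSdef, mem_insert_iff, mem_diff, mem_singleton_iff]
    right; right
    exact ⟨hmem, hca t⟩
  have harA : (a + (r:ℂ)) ∉ A := c.source ▸ hcA 0
  -- a path from b to a + r in the complement of A
  have hconn : IsPathConnected (Aᶜ : Set ℂ) :=
    hA.countable.isPathConnected_compl_of_one_lt_rank
      (Complex.rank_real_complex ▸ Nat.one_lt_ofNat)
  have hJ : JoinedIn (Aᶜ : Set ℂ) b (a + r) := hconn.joinedIn b hb (a + r) harA
  set q : Path b (a + (r:ℂ)) := hJ.somePath with hqdef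
  have hqA : ∀ t, q t ∉ A := fun t => hJ.somePath_mem t
  have hqsA : ∀ t, q.symm t ∉ A := by
    intro t
    rw [Path.symm_apply]
    exact hqA _
  set γ : Path b b := q.trans (c.trans q.symm) with hγdef
  have hγA : ∀ t, γ t ∉ A :=
    trans_forall q (c.trans q.symm) (· ∉ A) hqA (trans_forall c q.symm (· ∉ A) hcA hqsA)
  obtain ⟨H, hH⟩ := hloops γ hγA
  have hHa : ∀ x : unitInterval × unitInterval, H x ≠ a := fun x h => hH x (by rw [h]; exact haA)
  have hpa : ∀ t : unitInterval, p t ≠ a := fun t h => hp t (by rw [h]; exact haA)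
  have hqa : ∀ t : unitInterval, q t ≠ a := fun t h => hqA t (by rw [h]; exact haA)
  have hqsa : ∀ t : unitInterval, q.symm t ≠ a := fun t h => hqsA t (by rw [h]; exact haA)
  -- values of the right-hand side loop avoid a
  have hRHSa : ∀ t, ((p.trans (γ.map φ.continuous)).trans p.symm) t ≠ a := by
    intro t h
    have happ : H (1, t) = ((p.trans (γ.map φ.continuous)).trans p.symm) t :=
      ContinuousMap.Homotopy.apply_one H.toHomotopy t
    exact hHa (1, t) (happ.trans h)
  have hpMa : ∀ t, (p.trans (γ.map φ.continuous)) t ≠ a :=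
    forall_of_trans_left _ _ (· ≠ a) hRHSa
  have hMa : ∀ t, (γ.map φ.continuous) t ≠ a :=
    forall_of_trans_right _ _ (· ≠ a) hpMa
  have hMdec : γ.map φ.continuous =
      (q.map φ.continuous).trans ((c.map φ.continuous).trans (q.symm.map φ.continuous)) := by
    rw [hγdef, Path.map_trans, Path.map_trans]
  rw [hMdec] at hMa
  have hφqa : ∀ t, (q.map φ.continuous) t ≠ a := forall_of_trans_left _ _ (· ≠ a) hMa
  have hrest : ∀ t, ((c.map φ.continuous).trans (q.symm.map φ.continuous)) t ≠ a :=
    forall_of_trans_right _ _ (· ≠ a) hMa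
  have hφca : ∀ t, (c.map φ.continuous) t ≠ a := forall_of_trans_left _ _ (· ≠ a) hrest
  have hφqsa : ∀ t, (q.symm.map φ.continuous) t ≠ a := forall_of_trans_right _ _ (· ≠ a) hrest
  -- φ misses a on the closed disk of radius r around a
  have hmiss : ∀ w : ℂ, dist w a ≤ r → φ w ≠ a := by
    intro w hw h
    apply hkey w hw
    have : w = a' := by
      have := congrArg φ.symm h
      rwa [φ.symm_apply_apply] at this
    rw [hSdef, this]
    exact mem_insert _ _
  -- compute the two winding numbers
  have wγ : wind a γ.extend = 2*Real.pi*Complex.I := by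
    rw [hγdef, wind_trans a q (c.trans q.symm) hqa (trans_forall c q.symm (· ≠ a) hca hqsa),
      wind_trans a c q.symm hca hqsa, wind_symm a q hqa, wind_circle a r hr c hc]
    ring
  have wRHS : wind a ((p.trans (γ.map φ.continuous)).trans p.symm).extend = 0 := by
    have hpsym : ∀ t : unitInterval, p.symm t ≠ a := by
      intro t
      rw [Path.symm_apply]
      exact hpa _
    rw [hMdec] at hpMa ⊢
    rw [wind_trans a _ p.symm hpMa hpsym, wind_symm a p hpa,
      wind_trans a p _ hpa hMa, wind_trans a _ _ hφqa hrest,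
      wind_trans a _ _ hφca hφqsa]
    rw [show q.symm.map φ.continuous = (q.map φ.continuous).symm from
      (Path.map_symm q φ.continuous).symm]
    rw [wind_symm a (q.map φ.continuous) hφqa,
      wind_circle_map_zero a r hr φ φ.continuous hmiss c hc]
    ring
  have hHW := wind_homotopy a H hHa
  rw [wγ, wRHS] at hHW
  have h2πI : (2*(Real.pi:ℂ)*Complex.I) ≠ 0 := by
    simp [Real.pi_ne_zero, Complex.I_ne_zero, Complex.ofReal_ne_zero]
  exact h2πI hHW
end
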